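/- Let Z be a finite set and let a 'realization vector' be a function ρ : Z → ℝ≥0. Suppose a finite family of plans σ^1,…,σ^k with associated indicator realization vectors ρ^{σ^j} ∈ {0,1}^Z and weights w_1,…,w_k > 0 satisfy ρ = ∑_{j=1}^k w_j ρ^{σ^j}, where at each step j the weight w_j equals the minimum of the residual ω^{j-1} over the support of ρ^{σ^j} (ω^0 = ρ, ω^j = ω^{j-1} − w_j ρ^{σ^j}), each w_j > 0, and ω^k = 0. Then the weights sum to the common value ∑_j w_j, all distinct plans appear at most once, and k ≤ |Z|. -/

import Mathlib

open Finset

/-- Abstract form of the normal-form strategy reconstruction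
(Algorithm 2). A realization vector `ρ` is decomposed as a positive combination of
indicator realization vectors of plans (identified with their supports
`Sup j ⊆ Z`), where each weight `w j` is the minimum of the current residual
`ω j` over the support of the `j`-th plan, every weight is positive, and the final
residual is zero. Then distinct steps select distinct plans (the supports are
injective) and the number of steps is at most `|Z|`. -/
theorem stmt7
    {Z : Type*} [Fintype Z] [DecidableEq Z]
    (k : ℕ) (ρ : Z → ℝ) (hρ : ∀ z, 0 ≤ ρ z)
    (Sup : Fin k → Finset Z) (hne : ∀ j, (Sup j).Nonempty)
    (w : Fin k → ℝ)
    (ω : ℕ → Z → ℝ)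
    (h0 : ω 0 = ρ)
    (hupd : ∀ (j : Fin k) (z : Z),
      ω (j + 1) z = ω j z - w j * (if z ∈ Sup j then 1 else 0))
    (hw : ∀ j : Fin k, w j = (Sup j).inf' (hne j) (ω j))
    (hwpos : ∀ j, 0 < w j)
    (hfin : ∀ z, ω k z = 0)
    (hdecomp : ∀ z, ρ z = ∑ j, w j * (if z ∈ Sup j then 1 else 0)) :
    Function.Injective Sup ∧ k ≤ Fintype.card Z := by
  -- witnesses attaining the minimum
  choose zf hzf hzw using fun j : Fin k => (Sup j).exists_mem_eq_inf' (hne j) (ω j)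
  -- once a coordinate is zero, it stays zero
  have hpers : ∀ (z : Z) (i j : ℕ), i ≤ j → j ≤ k → ω i z = 0 → ω j z = 0 := by
    intro z i j hij hjk h0z
    induction j with
    | zero =>
      have : i = 0 := Nat.le_zero.mp hij
      subst this; exact h0z
    | succ n ih =>
      rcases Nat.lt_or_ge i (n + 1) with h | h
      · have hn : ω n z = 0 := ih (by omega) (by omega)
        have hnk : n < k := by omega
        have hz : z ∉ Sup ⟨n, hnk⟩ := by
          intro hz
          have hle := Finset.inf'_le (ω n) hz
          have hwn := hw ⟨n, hnk⟩
          have : w ⟨n, hnk⟩ ≤ 0 := by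
            rw [hwn]; exact hle.trans hn.le
          linarith [hwpos ⟨n, hnk⟩]
        have hu := hupd ⟨n, hnk⟩ z
        simp only [if_neg hz, mul_zero, sub_zero] at hu
        simpa [hn] using hu
      · have : i = n + 1 := by omega
        subst this; exact h0z
  -- the witness coordinate is zeroed at the next step
  have hzero : ∀ j : Fin k, ω (j + 1) (zf j) = 0 := by
    intro j
    have hu := hupd j (zf j)
    rw [if_pos (hzf j)] at hu
    have : ω j (zf j) = w j := by rw [hw j, hzw j]
    rw [hu, this]; ring
  -- hence zero forever after
  have key : ∀ i j : Fin k, (i : ℕ) < j → ω j (zf i) = 0 := by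
    intro i j hij
    exact hpers (zf i) (i + 1) j (by omega) (le_of_lt j.isLt) (hzero i)
  -- residual at step j is positive on Sup j
  have hposSup : ∀ (j : Fin k) (z : Z), z ∈ Sup j → 0 < ω j z := by
    intro j z hz
    have hle := Finset.inf'_le (ω j) hz
    have := hwpos j
    rw [hw j] at this
    linarith
  -- supports at distinct steps differ
  have hSupne : ∀ i j : Fin k, (i : ℕ) < j → Sup i ≠ Sup j := by
    intro i j hij heq
    have h1 : zf i ∈ Sup j := heq ▸ hzf i
    have := hposSup j (zf i) h1
    rw [key i j hij] at this
    exact lt_irrefl 0 this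
  have hinjS : Function.Injective Sup := by
    intro i j h
    by_contra hne'
    rcases lt_or_gt_of_ne (fun hv => hne' (Fin.ext hv) :
        (i : ℕ) ≠ j) with hlt | hlt
    · exact hSupne i j hlt h
    · exact hSupne j i hlt h.symm
  have hinjz : Function.Injective zf := by
    intro i j h
    by_contra hne'
    have aux : ∀ a b : Fin k, (a : ℕ) < b → zf a ≠ zf b := by
      intro a b hab heq
      have := hposSup b (zf b) (hzf b)
      rw [← heq, key a b hab] at this
      exact lt_irrefl 0 this
    rcases lt_or_gt_of_ne (fun hv => hne' (Fin.ext hv) : (i : ℕ) ≠ j) with hlt | hlt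
    · exact aux i j hlt h
    · exact aux j i hlt h.symm
  exact ⟨hinjS, by simpa using Fintype.card_le_of_injective zf hinjz⟩
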